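/- Let (p,q) ∈ ℝ² satisfy the Diophantine condition and let τ ∈ ℂ with Im τ > 0. Then every entire holomorphic function F : ℂ² → ℂ that is periodic with respect to the three vectors (0,1), (1,p), (τ,q) — i.e., F(z+λ) = F(z) for all z ∈ ℂ² and each λ ∈ {(0,1), (1,p), (τ,q)} — is constant. (Equivalently, the quotient U₀ = ℂ²/Λ₀ admits no non-constant holomorphic function, i.e., U₀ is a toroidal group.) -/

import Mathlib

open Complex

/-- A pair `(p, q)` of real numbers satisfies the Diophantine condition. -/
def DiophantineCondition (p q : ℝ) : Prop :=
  ∃ ϑ : ℝ, 0 < ϑ ∧ ∃ A : ℝ, 0 < A ∧ ∀ n : ℕ, 0 < n → ∀ μ ν : ℤ,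
    A * (n : ℝ) ^ (-ϑ) ≤
      ‖(n : ℂ) * ((p : ℂ) + (q : ℂ) * Complex.I) - ((μ : ℂ) + (ν : ℂ) * Complex.I)‖

open Complex MeasureTheory Metric Set Function Filter Bornology intervalIntegral

noncomputable section


/-- The exponential `t ↦ exp(-2πint)` for `t : ℝ`. -/
def ee (n : ℤ) (t : ℝ) : ℂ := Complex.exp ((((-2) * Real.pi * n * t : ℝ)) * Complex.I)

lemma ee_norm (n : ℤ) (t : ℝ) : ‖ee n t‖ = 1 := Complex.norm_exp_ofReal_mul_I _

lemma ee_add (n : ℤ) (s t : ℝ) : ee n (s + t) = ee n s * ee n t := by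
  rw [ee, ee, ee, ← Complex.exp_add]; congr 1; push_cast; ring

lemma ee_periodic (n : ℤ) : Function.Periodic (ee n) 1 := by
  intro t
  rw [ee_add]
  have h1 : ee n 1 = 1 := by
    rw [ee]
    have := Complex.exp_int_mul_two_pi_mul_I (-n)
    rw [← this]; congr 1; push_cast; ring
  rw [h1, mul_one]

lemma ee_continuous (n : ℤ) : Continuous (ee n) := by
  exact Complex.continuous_exp.comp (by continuity)

lemma ee_eq_one_imp {n : ℤ} {r : ℝ} (h : ee n r = 1) : ∃ m : ℤ, (n : ℝ) * r = (m : ℝ) := by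
  rw [ee, Complex.exp_eq_one_iff] at h
  obtain ⟨k, hk⟩ := h
  refine ⟨-k, ?_⟩
  have him := congrArg Complex.im hk
  simp [Complex.mul_I_im] at him
  -- him : -2 * π * n * r = k * (2 * π) (roughly)
  have hπ : (Real.pi : ℝ) ≠ 0 := Real.pi_ne_zero
  push_cast at him ⊢
  nlinarith [him, Real.pi_pos]

/-- A continuous function whose norm is invariant under translation by `1` and by `τ`
(with `Im τ > 0`) is bounded. -/
lemma bounded_of_double_periodic_norm {g : ℂ → ℂ} (hg : Continuous g) {τ : ℂ} (hτ : 0 < τ.im)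
    (h1 : ∀ z, ‖g (z + 1)‖ = ‖g z‖) (h2 : ∀ z, ‖g (z + τ)‖ = ‖g z‖) :
    ∃ C, ∀ z, ‖g z‖ ≤ C := by
  set f : ℂ → ℝ := fun z => ‖g z‖ with hf
  have hp1 : Function.Periodic f 1 := h1
  have hp2 : Function.Periodic f τ := h2
  set K : Set ℂ := (fun ab : ℝ × ℝ => (ab.1 : ℂ) + (ab.2 : ℂ) * τ) '' (Icc 0 1 ×ˢ Icc 0 1) with hK
  have hKc : IsCompact K :=
    (isCompact_Icc.prod isCompact_Icc).image (by continuity)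
  obtain ⟨C, hC⟩ := hKc.exists_bound_of_continuousOn hg.continuousOn
  refine ⟨C, fun z => ?_⟩
  set b : ℝ := z.im / τ.im with hb
  set a : ℝ := z.re - b * τ.re with ha
  set m : ℤ := ⌊a⌋ with hm
  set k : ℤ := ⌊b⌋ with hk
  set w : ℂ := ((a - m : ℝ) : ℂ) + ((b - k : ℝ) : ℂ) * τ with hw
  have hzw : z = w + (m : ℂ) * 1 + (k : ℂ) * τ := by
    apply Complex.ext
    · simp [hw, ha]
      ring
    · simp [hw]
      field_simp [hb]
      rw [hb]; field_simp [hτ.ne']; ring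
  have hwK : w ∈ K := by
    refine ⟨(a - m, b - k), ⟨⟨?_, ?_⟩, ⟨?_, ?_⟩⟩, rfl⟩
    · exact sub_nonneg.2 (Int.floor_le a)
    · exact le_of_lt (by rw [hm, Int.self_sub_floor]; exact Int.fract_lt_one a)
    · exact sub_nonneg.2 (Int.floor_le b)
    · exact le_of_lt (by rw [hk, Int.self_sub_floor]; exact Int.fract_lt_one b)
  have : f z = f w := by
    rw [hzw]
    have e1 := (hp2.int_mul k) (w + (m : ℂ) * 1)
    have e2 := (hp1.int_mul m) w
    calc f (w + (m : ℂ) * 1 + (k : ℂ) * τ) = f (w + (m : ℂ) * 1) := by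
          rw [← e1]
      _ = f w := by
          have : w + (m : ℂ) * 1 = w + (m : ℂ) * (1 : ℂ) := rfl
          rw [← e2]
  rw [show ‖g z‖ = f z from rfl, this]
  exact hC w hwK

/-- If `(p, q)` satisfies the Diophantine condition and `Im τ > 0`, then every entire
holomorphic function `F : ℂ² → ℂ` which is periodic with respect to the three lattice
vectors `(0,1)`, `(1,p)`, `(τ,q)` is constant; equivalently, `U₀ = ℂ²/Λ₀` admits no
non-constant holomorphic function, i.e., `U₀` is a toroidal group. -/
theorem periodic_entire_function_constant (p q : ℝ) (τ : ℂ)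
    (hpq : DiophantineCondition p q) (hτ : 0 < τ.im)
    (F : ℂ × ℂ → ℂ) (hF : Differentiable ℂ F)
    (hper₁ : ∀ z : ℂ × ℂ, F (z + ((0 : ℂ), (1 : ℂ))) = F z)
    (hper₂ : ∀ z : ℂ × ℂ, F (z + ((1 : ℂ), (p : ℂ))) = F z)
    (hper₃ : ∀ z : ℂ × ℂ, F (z + (τ, (q : ℂ))) = F z) :
    ∃ c : ℂ, ∀ z : ℂ × ℂ, F z = c := by
  haveI : Fact (0 < (1 : ℝ)) := ⟨one_pos⟩
  have hFc : Continuous F := hF.continuous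
  -- the Fourier coefficients
  set c : ℤ → ℂ → ℂ := fun n z => ∫ t in (0 : ℝ)..1, ee n t * F (z, (t : ℂ)) with hcdef
  have hint_cont : ∀ (n : ℤ) (z : ℂ), Continuous fun t : ℝ => ee n t * F (z, (t : ℂ)) :=
    fun n z => (ee_continuous n).mul (hFc.comp (by continuity))
  -- periodicity in second variable
  have hFt : ∀ (z₁ w : ℂ), F (z₁, w + 1) = F (z₁, w) := by
    intro z₁ w
    have := hper₁ (z₁, w)
    simpa [Prod.mk_add_mk] using this
  have hInteg_per : ∀ (n : ℤ) (z : ℂ),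
      Function.Periodic (fun x : ℝ => ee n x * F (z, (x : ℂ))) 1 := by
    intro n z x
    show ee n (x + 1) * F (z, ((x + 1 : ℝ) : ℂ)) = ee n x * F (z, (x : ℂ))
    have h1 : ((x + 1 : ℝ) : ℂ) = (x : ℂ) + 1 := by push_cast; ring
    rw [ee_periodic n x, h1, hFt]
  -- the key shift identity
  have key : ∀ (u : ℂ) (r : ℝ), (∀ z : ℂ × ℂ, F (z + (u, (r : ℂ))) = F z) →
      ∀ (n : ℤ) (z : ℂ), c n (z + u) = ee n r * c n z := by
    intro u r hper n z
    have h1 : ∀ t : ℝ, F (z + u, (t : ℂ)) = F (z, ((t - r : ℝ) : ℂ)) := by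
      intro t
      have := hper (z, ((t - r : ℝ) : ℂ))
      rw [← this]
      have : ((t - r : ℝ) : ℂ) + (r : ℂ) = (t : ℂ) := by push_cast; ring
      rw [Prod.mk_add_mk, this]
    have step1 : c n (z + u) = ∫ t in (0:ℝ)..1, (fun x : ℝ => ee n (x + r) * F (z, (x : ℂ))) (t - r) := by
      rw [hcdef]
      refine intervalIntegral.integral_congr fun t _ => ?_
      simp only [h1 t, sub_add_cancel]
    have hsub := intervalIntegral.integral_comp_sub_right (a := (0:ℝ)) (b := 1)
      (fun x : ℝ => ee n (x + r) * F (z, (x : ℂ))) r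
    rw [step1, hsub]
    have step2 : ∀ x : ℝ, ee n (x + r) * F (z, (x : ℂ)) = ee n r * (ee n x * F (z, (x : ℂ))) := by
      intro x; rw [ee_add]; ring
    rw [intervalIntegral.integral_congr (fun x _ => step2 x), intervalIntegral.integral_const_mul]
    congr 1
    have := (hInteg_per n z).intervalIntegral_add_eq (0 - r) 0
    rw [hcdef]
    simp only [zero_sub] at this ⊢
    rw [show (1:ℝ) - r = -r + 1 by ring]; simpa only [zero_add] using this
  -- differentiability of the Fourier coefficients
  have hslice : ∀ w₂ : ℂ, Differentiable ℂ fun w => F (w, w₂) :=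
    fun w₂ => hF.comp (differentiable_id.prodMk (differentiable_const w₂))
  have hdiff : ∀ n : ℤ, Differentiable ℂ (c n) := by
    intro n x₀
    obtain ⟨C, hC⟩ := ((isCompact_closedBall x₀ 2).prod
      (isCompact_closedBall (0 : ℂ) 1)).exists_bound_of_continuousOn hFc.continuousOn
    set D : ℂ → ℝ → ℂ := fun x t => deriv (fun w => F (w, (t : ℂ))) x with hD
    have hDat : ∀ (x : ℂ) (t : ℝ), HasDerivAt (fun w => F (w, (t : ℂ))) (D x t) x :=
      fun x t => ((hslice (t : ℂ)) x).hasDerivAt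
    have hDrepr : ∀ (x : ℂ) (t : ℝ), D x t = fderiv ℂ F (x, (t : ℂ)) ((1 : ℂ), (0 : ℂ)) := by
      intro x t
      have h1 : HasDerivAt (fun w : ℂ => (w, ((t : ℝ) : ℂ))) ((1 : ℂ), (0 : ℂ)) x :=
        (hasDerivAt_id x).prodMk (hasDerivAt_const x _)
      have h2 : HasFDerivAt F (fderiv ℂ F (x, (t : ℂ))) (x, (t : ℂ)) := (hF _).hasFDerivAt
      exact (h2.comp_hasDerivAt x h1).deriv
    have hDbound : ∀ t ∈ Set.uIoc (0 : ℝ) 1, ∀ x ∈ ball x₀ 1, ‖D x t‖ ≤ C := by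
      intro t ht x hx
      have htI : t ∈ Set.Ioc (0 : ℝ) 1 := by rwa [Set.uIoc_of_le zero_le_one] at ht
      have hb : ∀ w ∈ sphere x 1, ‖F (w, (t : ℂ))‖ ≤ C := by
        intro w hw
        refine hC (w, (t : ℂ)) ⟨?_, ?_⟩
        · have h1 : dist w x = 1 := mem_sphere.1 hw
          have h2 : dist x x₀ ≤ 1 := le_of_lt (mem_ball.1 hx)
          exact mem_closedBall.2 ((dist_triangle w x x₀).trans (by linarith))
        · have h3 : ‖((t : ℝ) : ℂ)‖ ≤ 1 := by
            rw [Complex.norm_real, Real.norm_eq_abs, abs_of_pos htI.1]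
            exact htI.2
          simpa [mem_closedBall, dist_zero_right] using h3
      have := Complex.norm_deriv_le_of_forall_mem_sphere_norm_le one_pos
        ((hslice (t : ℂ)).diffContOnCl) hb
      simpa using this
    have hF'meas : AEStronglyMeasurable (fun t : ℝ => ee n t * D x₀ t)
        (volume.restrict (Set.uIoc (0 : ℝ) 1)) := by
      have hm : Measurable fun t : ℝ => D x₀ t := by
        simp only [funext fun t => hDrepr x₀ t]
        exact (measurable_fderiv_apply_const ℂ F _).comp
          (Continuous.measurable (by continuity))
      exact ((ee_continuous n).measurable.mul hm).stronglyMeasurable.aestronglyMeasurable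
    have hder := (intervalIntegral.hasDerivAt_integral_of_dominated_loc_of_deriv_le
      (F := fun x (t : ℝ) => ee n t * F (x, (t : ℂ)))
      (F' := fun x (t : ℝ) => ee n t * D x t) (x₀ := x₀)
      (a := (0:ℝ)) (b := 1) (μ := volume) (bound := fun _ => C)
      (ball_mem_nhds x₀ one_pos)
      (Filter.Eventually.of_forall fun x => (hint_cont n x).aestronglyMeasurable)
      ((hint_cont n x₀).intervalIntegrable _ _)
      hF'meas
      (Filter.Eventually.of_forall fun t => fun ht x hx => by
        rw [norm_mul, ee_norm, one_mul]; exact hDbound t ht x hx)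
      (intervalIntegrable_const)
      (Filter.Eventually.of_forall fun t => fun ht x hx => (hDat x t).const_mul (ee n t))).2
    exact hder.differentiableAt
  -- each Fourier coefficient is a constant function of z
  have hconst : ∀ (n : ℤ) (z : ℂ), c n z = c n 0 := by
    intro n z
    have h1 : ∀ w : ℂ, ‖c n (w + 1)‖ = ‖c n w‖ := by
      intro w; rw [key 1 p hper₂ n w, norm_mul, ee_norm, one_mul]
    have h2 : ∀ w : ℂ, ‖c n (w + τ)‖ = ‖c n w‖ := by
      intro w; rw [key τ q hper₃ n w, norm_mul, ee_norm, one_mul]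
    obtain ⟨C, hC⟩ := bounded_of_double_periodic_norm (hdiff n).continuous hτ h1 h2
    exact (hdiff n).apply_eq_apply_of_bounded
      (isBounded_iff_forall_norm_le.2 ⟨C, by rintro _ ⟨w, rfl⟩; exact hC w⟩) z 0
  -- nonzero Fourier coefficients vanish
  obtain ⟨ϑ, hϑ, A, hA, hdio⟩ := hpq
  have hzero : ∀ n : ℤ, n ≠ 0 → ∀ z : ℂ, c n z = 0 := by
    intro n hn z
    rw [hconst n z]
    by_contra hne
    have hp1 : c n 0 = ee n p * c n 0 := by
      have := key 1 p hper₂ n 0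
      rwa [hconst n (0 + 1)] at this
    have hq1 : c n 0 = ee n q * c n 0 := by
      have := key τ q hper₃ n 0
      rwa [hconst n (0 + τ)] at this
    have heep : ee n p = 1 := by
      have h0 : (ee n p - 1) * c n 0 = 0 := by linear_combination -hp1
      rcases mul_eq_zero.1 h0 with h' | h'
      · exact sub_eq_zero.1 h'
      · exact absurd h' hne
    have heeq : ee n q = 1 := by
      have h0 : (ee n q - 1) * c n 0 = 0 := by linear_combination -hq1
      rcases mul_eq_zero.1 h0 with h' | h'
      · exact sub_eq_zero.1 h'
      · exact absurd h' hne
    obtain ⟨μ, hμ⟩ := ee_eq_one_imp heep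
    obtain ⟨ν, hν⟩ := ee_eq_one_imp heeq
    set N : ℕ := n.natAbs with hN
    have hNpos : 0 < N := Int.natAbs_pos.2 hn
    have mk0 : ∀ μ' ν' : ℤ, (N : ℝ) * p = (μ' : ℝ) → (N : ℝ) * q = (ν' : ℝ) →
        ((N : ℂ) * ((p : ℂ) + (q : ℂ) * Complex.I) - ((μ' : ℂ) + (ν' : ℂ) * Complex.I)) = 0 := by
      intro μ' ν' h1 h2
      have e1 : ((N : ℂ) * (p : ℂ)) = (μ' : ℂ) := by
        have := congrArg Complex.ofReal h1
        push_cast at this ⊢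
        exact this
      have e2 : ((N : ℂ) * (q : ℂ)) = (ν' : ℂ) := by
        have := congrArg Complex.ofReal h2
        push_cast at this ⊢
        exact this
      linear_combination e1 + Complex.I * e2
    have hzero_pt : ∃ μ' ν' : ℤ,
        ((N : ℂ) * ((p : ℂ) + (q : ℂ) * Complex.I) - ((μ' : ℂ) + (ν' : ℂ) * Complex.I)) = 0 := by
      rcases Int.natAbs_eq n with h | h
      · have hnr : (n : ℝ) = (N : ℝ) := by rw [h]; simp [hN, Nat.cast_natAbs]
        exact ⟨μ, ν, mk0 μ ν (by rw [← hnr]; exact hμ) (by rw [← hnr]; exact hν)⟩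
      · have hnr : (n : ℝ) = -(N : ℝ) := by rw [h]; simp [hN, Nat.cast_natAbs]
        have hμ' := hμ; have hν' := hν
        rw [hnr] at hμ' hν'
        refine ⟨-μ, -ν, mk0 (-μ) (-ν) ?_ ?_⟩
        · push_cast
          linear_combination -hμ'
        · push_cast
          linear_combination -hν'
    obtain ⟨μ', ν', hpt⟩ := hzero_pt
    have hd := hdio N hNpos μ' ν'
    rw [hpt] at hd
    simp only [norm_zero] at hd
    have hpos : 0 < A * (N : ℝ) ^ (-ϑ) :=
      mul_pos hA (Real.rpow_pos_of_pos (by exact_mod_cast hNpos) _)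
    linarith
  -- Fourier reconstruction: for every z₁ and real t, F (z₁, t) = c 0 0
  set c₀ : ℂ := c 0 0 with hc₀
  have hreal : ∀ (z₁ : ℂ) (t : ℝ), t ∈ Set.Ico (0 : ℝ) 1 → F (z₁, (t : ℂ)) = c₀ := by
    intro z₁ t htI
    set g : ℝ → ℂ := fun t => F (z₁, (t : ℂ)) with hg
    have hg01 : g 0 = g 1 := by
      have h1 : ((1 : ℝ) : ℂ) = ((0 : ℝ) : ℂ) + 1 := by norm_num
      rw [hg]
      simp only
      rw [h1, hFt]
    have gcont : Continuous g := hFc.comp (continuous_const.prodMk Complex.continuous_ofReal)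
    set G : C(AddCircle (1 : ℝ), ℂ) :=
      ⟨AddCircle.liftIco 1 0 g, AddCircle.liftIco_zero_continuous hg01 gcont.continuousOn⟩
      with hG
    have hcoeff : ∀ m : ℤ, fourierCoeff (⇑G) m = c m z₁ := by
      intro m
      have h1 : fourierCoeff (⇑G) m = fourierCoeffOn (lt_add_of_pos_right 0 one_pos) g m := by
        exact fourierCoeff_liftIco_eq g m
      rw [h1, fourierCoeffOn_eq_integral]
      simp only [zero_add, sub_zero, one_smul, one_div_one]
      refine intervalIntegral.integral_congr fun x _ => ?_
      rw [smul_eq_mul]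
      congr 1
      rw [fourier_coe_apply, ee]
      congr 1
      push_cast
      ring
    have hcoeffs : (fun m : ℤ => fourierCoeff (⇑G) m) = fun m => if m = 0 then c₀ else 0 := by
      funext m
      rw [hcoeff m]
      by_cases hm : m = 0
      · rw [hm, if_pos rfl, hconst 0 z₁]
      · rw [if_neg hm, hzero m hm z₁]
    have hsummable : Summable (fun m : ℤ => fourierCoeff (⇑G) m) := by
      rw [hcoeffs]
      exact (hasSum_ite_eq (0 : ℤ) c₀).summable
    have hsum := hasSum_fourier_series_of_summable hsummable
    have hterm : (fun m : ℤ => fourierCoeff (⇑G) m • fourier m) =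
        fun m : ℤ => if m = 0 then (c₀ • fourier 0 : C(AddCircle (1:ℝ), ℂ)) else 0 := by
      funext m
      by_cases hm : m = 0
      · rw [hm, congrFun hcoeffs 0, if_pos rfl, if_pos rfl]
      · rw [congrFun hcoeffs m, if_neg hm, if_neg hm, zero_smul]
    have hGeq : G = c₀ • fourier 0 := by
      refine hsum.unique ?_
      rw [hterm]
      exact hasSum_ite_eq (0 : ℤ) _
    have := congrArg (fun f : C(AddCircle (1:ℝ), ℂ) => f ((t : ℝ) : AddCircle (1:ℝ))) hGeq
    simp only [ContinuousMap.smul_apply, ContinuousMap.coe_smul] at this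
    have hGt : G ((t : ℝ) : AddCircle (1:ℝ)) = g t :=
      AddCircle.liftIco_zero_coe_apply (f := g) htI
    rw [hGt] at this
    rw [hg] at this
    simp only at this
    rw [this, fourier_zero, smul_eq_mul, mul_one]
  -- identity theorem: for each z₁ the entire function w ↦ F (z₁, w) is constant
  have hfinal : ∀ (z₁ w : ℂ), F (z₁, w) = c₀ := by
    intro z₁ w
    set h : ℂ → ℂ := fun w => F (z₁, w) with hh
    have hdiffh : Differentiable ℂ h := hF.comp ((differentiable_const z₁).prodMk differentiable_id)
    have hanal : AnalyticOnNhd ℂ h Set.univ := analyticOnNhd_univ_iff_differentiable.2 hdiffh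
    have hconst_anal : AnalyticOnNhd ℂ (fun _ : ℂ => c₀) Set.univ := analyticOnNhd_const
    -- accumulation of real points at 1/2
    have hfreq : ∃ᶠ x in nhdsWithin (((1:ℝ)/2 : ℝ) : ℂ) {(((1:ℝ)/2 : ℝ) : ℂ)}ᶜ, h x = c₀ := by
      set u : ℕ → ℂ := fun k => (((1:ℝ)/2 + ((k : ℝ) + 3)⁻¹ : ℝ) : ℂ) with hu
      have hinv : Tendsto (fun k : ℕ => ((k : ℝ) + 3)⁻¹) atTop (nhds 0) :=
        tendsto_inv_atTop_zero.comp
          (tendsto_atTop_add_const_right atTop 3 tendsto_natCast_atTop_atTop)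
      have hre : Tendsto (fun k : ℕ => ((1:ℝ)/2 + ((k : ℝ) + 3)⁻¹)) atTop (nhds ((1:ℝ)/2)) := by
        simpa using hinv.const_add ((1:ℝ)/2)
      have hu_t : Tendsto u atTop (nhds (((1:ℝ)/2 : ℝ) : ℂ)) :=
        (Complex.continuous_ofReal.tendsto _).comp hre
      have hu_ne : ∀ k, u k ≠ (((1:ℝ)/2 : ℝ) : ℂ) := by
        intro k
        rw [hu]
        simp only [ne_eq, Complex.ofReal_inj]
        have : (0:ℝ) < ((k : ℝ) + 3)⁻¹ := by positivity
        intro hcon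
        nlinarith
      have hu_t' : Tendsto u atTop (nhdsWithin (((1:ℝ)/2 : ℝ) : ℂ) {(((1:ℝ)/2 : ℝ) : ℂ)}ᶜ) :=
        tendsto_nhdsWithin_of_tendsto_nhds_of_eventually_within u hu_t
          (Filter.Eventually.of_forall fun k => hu_ne k)
      refine hu_t'.frequently (Filter.Frequently.of_forall fun k => ?_)
      have hmem : ((1:ℝ)/2 + ((k : ℝ) + 3)⁻¹) ∈ Set.Ico (0:ℝ) 1 := by
        constructor
        · positivity
        · have h1 : ((k : ℝ) + 3)⁻¹ ≤ 3⁻¹ := by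
            apply inv_anti₀ (by norm_num)
            have : (0:ℝ) ≤ (k : ℝ) := Nat.cast_nonneg k
            linarith
          norm_num at h1 ⊢
          linarith
      exact hreal z₁ _ hmem
    have := hanal.eqOn_of_preconnected_of_frequently_eq hconst_anal isPreconnected_univ
      (Set.mem_univ _) hfreq
    exact this (Set.mem_univ w)
  exact ⟨c₀, fun z => hfinal z.1 z.2⟩

end
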